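/- arXiv:2202.11666 — 5 statements merged into one kernel-verified Lean document; each statement's English description precedes it below -/
import Mathlib

section
/- Let q ≥ 1 and k ≥ 1. For indices i₁, …, i_{2k} ∈ {0, 1, …, q}, the trace of the product ∏_{r=1}^{k} (B_{i_{2r−1}} · E · B_{i_{2r}}) in M_{2^q}(ℂ) (i.e. the trace of B_{i₁} E B_{i₂} B_{i₃} E B_{i₄} ⋯ B_{i_{2k−1}} E B_{i_{2k}}) equals 1 if i_{2k} = i₁ and i_{2r} = i_{2r+1} for every r = 1, …, k−1, and equals 0 otherwise. -/
open Matrix BigOperators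

/-- The 2×2 flip matrix `J = [[0,1],[1,0]]`. -/
noncomputable def J2 : Matrix (Fin 2) (Fin 2) ℂ := !![0, 1; 1, 0]

/-- The 2×2 matrix unit `E₁₁ = [[1,0],[0,0]]`. -/
noncomputable def E11 : Matrix (Fin 2) (Fin 2) ℂ := !![1, 0; 0, 0]

/-- `Bq q i` for `i = 1,…,q` is the Kronecker product with `J` in the `i`-th tensor factor and
the identity elsewhere; `Bq q 0` is the identity of `M_{2^q}(ℂ)`.  Here `M_{2^q}(ℂ)` is realized
as matrices indexed by `Fin q → Fin 2`, and the Kronecker product entrywise is the product of the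
entries of the factors. -/
noncomputable def Bq (q : ℕ) (i : Fin (q + 1)) :
    Matrix (Fin q → Fin 2) (Fin q → Fin 2) ℂ :=
  Matrix.of fun s t => ∏ j : Fin q,
    (if ((j : ℕ) + 1 = (i : ℕ)) then J2 else (1 : Matrix (Fin 2) (Fin 2) ℂ)) (s j) (t j)

/-- `Etens q = E₁₁^{⊗q}`. -/
noncomputable def Etens (q : ℕ) : Matrix (Fin q → Fin 2) (Fin q → Fin 2) ℂ :=
  Matrix.of fun s t => ∏ j : Fin q, E11 (s j) (t j)

def vv (q : ℕ) (i : Fin (q + 1)) : Fin q → Fin 2 :=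
  fun j => if (j : ℕ) + 1 = (i : ℕ) then 1 else 0

lemma vv_injective (q : ℕ) : Function.Injective (vv q) := by
  intro a b h
  by_contra hne
  have hne' : (a : ℕ) ≠ (b : ℕ) := fun hh => hne (Fin.ext hh)
  rcases Nat.eq_zero_or_pos (a : ℕ) with ha | ha
  · have hb : 0 < (b : ℕ) := by omega
    have hb' : (b : ℕ) - 1 < q := by omega
    have := congrFun h ⟨(b : ℕ) - 1, hb'⟩
    simp only [vv] at this
    rw [if_neg (by omega), if_pos (by omega)] at this
    exact absurd this (by decide)
  · have ha' : (a : ℕ) - 1 < q := by omega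
    have := congrFun h ⟨(a : ℕ) - 1, ha'⟩
    simp only [vv] at this
    rw [if_pos (by omega), if_neg (by omega)] at this
    exact absurd this (by decide)

lemma funext_iff_forall {q : ℕ} (s t : Fin q → Fin 2) :
    (∀ j, s j = t j) ↔ s = t := ⟨funext, fun h j => congrFun h j⟩

lemma Etens_eq (q : ℕ) :
    Etens q = Matrix.single (fun _ => 0) (fun _ => 0) (1 : ℂ) := by
  classical
  ext s t
  have key : ∀ j : Fin q, E11 (s j) (t j)
      = if (s j = 0 ∧ t j = 0) then 1 else 0 := by
    intro j
    have h1 : ∀ x y : Fin 2, E11 x y = if (x = 0 ∧ y = 0) then 1 else 0 := by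
      intro x y; fin_cases x <;> fin_cases y <;> simp [E11]
    exact h1 _ _
  simp only [Etens, Matrix.of_apply, key, Finset.prod_boole, Matrix.single]
  congr 1
  simp only [eq_iff_iff]
  constructor
  · intro hh
    exact ⟨(funext fun j => (hh j (Finset.mem_univ j)).1).symm,
           (funext fun j => (hh j (Finset.mem_univ j)).2).symm⟩
  · rintro ⟨h1, h2⟩ j _
    exact ⟨(congrFun h1 j).symm, (congrFun h2 j).symm⟩

lemma Bq_apply_right (q : ℕ) (i : Fin (q + 1)) (s : Fin q → Fin 2) :
    Bq q i s (fun _ => 0) = if s = vv q i then 1 else 0 := by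
  classical
  have key : ∀ j : Fin q,
      (if ((j : ℕ) + 1 = (i : ℕ)) then J2 else (1 : Matrix (Fin 2) (Fin 2) ℂ)) (s j) 0
        = if s j = vv q i j then 1 else 0 := by
    intro j
    have h1 : ∀ x : Fin 2, J2 x 0 = if x = 1 then 1 else 0 := by
      intro x; fin_cases x <;> simp [J2]
    have h2 : ∀ x : Fin 2, (1 : Matrix (Fin 2) (Fin 2) ℂ) x 0 = if x = 0 then 1 else 0 := by
      intro x; fin_cases x <;> simp [Matrix.one_apply]
    by_cases h : (j : ℕ) + 1 = (i : ℕ) <;> simp [h, vv, h1, h2]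
  simp only [Bq, Matrix.of_apply, key, Finset.prod_boole]
  congr 1
  simp only [eq_iff_iff]
  constructor
  · intro hh; exact funext fun j => hh j (Finset.mem_univ j)
  · intro hh j _; exact congrFun hh j

lemma Bq_apply_left (q : ℕ) (i : Fin (q + 1)) (t : Fin q → Fin 2) :
    Bq q i (fun _ => 0) t = if t = vv q i then 1 else 0 := by
  classical
  have key : ∀ j : Fin q,
      (if ((j : ℕ) + 1 = (i : ℕ)) then J2 else (1 : Matrix (Fin 2) (Fin 2) ℂ)) 0 (t j)
        = if t j = vv q i j then 1 else 0 := by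
    intro j
    have h1 : ∀ x : Fin 2, J2 0 x = if x = 1 then 1 else 0 := by
      intro x; fin_cases x <;> simp [J2]
    have h2 : ∀ x : Fin 2, (1 : Matrix (Fin 2) (Fin 2) ℂ) 0 x = if x = 0 then 1 else 0 := by
      intro x; fin_cases x <;> simp [Matrix.one_apply]
    by_cases h : (j : ℕ) + 1 = (i : ℕ) <;> simp [h, vv, h1, h2]
  simp only [Bq, Matrix.of_apply, key, Finset.prod_boole]
  congr 1
  simp only [eq_iff_iff]
  constructor
  · intro hh; exact funext fun j => hh j (Finset.mem_univ j)
  · intro hh j _; exact congrFun hh j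

lemma BEB (q : ℕ) (a b : Fin (q + 1)) :
    Bq q a * Etens q * Bq q b
      = Matrix.single (vv q a) (vv q b) (1 : ℂ) := by
  classical
  ext s t
  rw [Etens_eq]
  rw [Matrix.mul_apply]
  rw [Finset.sum_eq_single (fun _ => (0 : Fin 2))]
  · rw [Matrix.mul_single_apply_same, Bq_apply_right, Bq_apply_left,
      Matrix.single]
    simp only [Matrix.of_apply, mul_one]
    by_cases h1 : s = vv q a <;> by_cases h2 : t = vv q b <;>
      simp [h1, h2, eq_comm]
  · intro x _ hx
    rw [Matrix.mul_single_apply_of_ne _ _ _ _ _ hx, zero_mul]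
  · intro h; exact absurd (Finset.mem_univ _) h

theorem tst : True := trivial

lemma trace_std {n : Type*} [Fintype n] [DecidableEq n] (a b : n) :
    Matrix.trace (Matrix.single a b (1 : ℂ)) = if a = b then 1 else 0 := by
  classical
  simp only [Matrix.trace, Matrix.diag, Matrix.single, Matrix.of_apply]
  by_cases h : a = b
  · subst h; simp
  · rw [if_neg h]
    apply Finset.sum_eq_zero
    intro x _
    rw [if_neg]
    rintro ⟨rfl, h2⟩
    exact h h2.symm

lemma prod_std (q : ℕ) (i : ℕ → Fin (q + 1)) :
    ∀ k : ℕ, 1 ≤ k →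
    (List.ofFn fun r : Fin k =>
        Matrix.single (vv q (i (2 * (r : ℕ) + 1))) (vv q (i (2 * (r : ℕ) + 2)))
          (1 : ℂ)).prod
      = if (∀ r ∈ Finset.Icc 1 (k - 1), i (2 * r) = i (2 * r + 1))
        then Matrix.single (vv q (i 1)) (vv q (i (2 * k))) (1 : ℂ) else 0 := by
  classical
  intro k hk
  induction k, hk using Nat.le_induction with
  | base =>
    simp [List.ofFn_succ]
  | succ k hk ih =>
    rw [List.ofFn_succ']
    simp only [Fin.coe_castSucc, Fin.val_last]
    rw [List.concat_eq_append, List.prod_append, List.prod_singleton, ih]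
    have hsplit : (∀ r ∈ Finset.Icc 1 (k + 1 - 1), i (2 * r) = i (2 * r + 1))
        ↔ ((∀ r ∈ Finset.Icc 1 (k - 1), i (2 * r) = i (2 * r + 1))
            ∧ i (2 * k) = i (2 * k + 1)) := by
      constructor
      · intro h
        refine ⟨fun r hr => h r ?_, h k ?_⟩
        · simp only [Finset.mem_Icc] at hr ⊢; omega
        · simp only [Finset.mem_Icc]; omega
      · rintro ⟨h1, h2⟩ r hr
        simp only [Finset.mem_Icc] at hr
        rcases Nat.lt_or_ge r k with hrk | hrk
        · exact h1 r (by simp only [Finset.mem_Icc]; omega)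
        · have : r = k := by omega
          subst this; exact h2
    by_cases hC : ∀ r ∈ Finset.Icc 1 (k - 1), i (2 * r) = i (2 * r + 1)
    · rw [if_pos hC]
      by_cases hlast : i (2 * k) = i (2 * k + 1)
      · rw [if_pos (hsplit.mpr ⟨hC, hlast⟩)]
        have hvv : vv q (i (2 * k)) = vv q (i (2 * k + 1)) := by rw [hlast]
        rw [hvv, Matrix.single_mul_single_same, one_mul]
        rfl
      · rw [if_neg (fun h => hlast (hsplit.mp h).2)]
        have hvv : vv q (i (2 * k)) ≠ vv q (i (2 * k + 1)) :=
          fun h => hlast (vv_injective q h)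
        rw [Matrix.single_mul_single_of_ne (h := hvv)]
    · rw [if_neg hC, if_neg (fun h => hC (hsplit.mp h).1), zero_mul]

open scoped Classical in
/-- The trace of `B_{i₁} E B_{i₂} B_{i₃} E B_{i₄} ⋯ B_{i_{2k−1}} E B_{i_{2k}}` equals `1` if
`i_{2k} = i₁` and `i_{2r} = i_{2r+1}` for every `r = 1,…,k−1`, and equals `0` otherwise. -/
theorem trace_of_alternating_product (q k : ℕ) (hq : 1 ≤ q) (hk : 1 ≤ k)
    (i : ℕ → Fin (q + 1)) :
    Matrix.trace
      ((List.ofFn fun r : Fin k =>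
        Bq q (i (2 * (r : ℕ) + 1)) * Etens q * Bq q (i (2 * (r : ℕ) + 2))).prod)
    = if (i (2 * k) = i 1 ∧ ∀ r ∈ Finset.Icc 1 (k - 1), i (2 * r) = i (2 * r + 1))
      then 1 else 0 := by
  classical
  have hlist : (List.ofFn fun r : Fin k =>
        Bq q (i (2 * (r : ℕ) + 1)) * Etens q * Bq q (i (2 * (r : ℕ) + 2)))
      = List.ofFn fun r : Fin k =>
        Matrix.single (vv q (i (2 * (r : ℕ) + 1))) (vv q (i (2 * (r : ℕ) + 2)))
          (1 : ℂ) := by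
    congr 1
    funext r
    exact BEB q _ _
  rw [hlist, prod_std q i k hk]
  by_cases hC : ∀ r ∈ Finset.Icc 1 (k - 1), i (2 * r) = i (2 * r + 1)
  · rw [if_pos hC, trace_std]
    by_cases h : i (2 * k) = i 1
    · rw [if_pos (show vv q (i 1) = vv q (i (2 * k)) from by rw [h]),
        if_pos (show i (2 * k) = i 1 ∧ _ from ⟨h, hC⟩)]
    · rw [if_neg (fun hh : _ ∧ _ => h hh.1),
        if_neg (fun hh => h (vv_injective q hh).symm)]
  · rw [if_neg hC, Matrix.trace_zero, if_neg (fun hh : _ ∧ _ => hC hh.2)]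
end

section
/- Let q ≥ 1 and k ≥ 1. For indices i₁, …, i_{2k} ∈ {0, 1, …, q}, the ((0,…,0),(0,…,0)) entry of the product B_{i₁} E B_{i₂} B_{i₃} E B_{i₄} ⋯ B_{i_{2k−1}} E B_{i_{2k}} in M_{2^q}(ℂ) (equivalently, the value of the functional η^{⊗q} on this product, where η picks the upper-left entry of a 2×2 matrix) equals 1 if i₁ = 0, i_{2k} = 0, and i_{2r} = i_{2r+1} for every r = 1, …, k−1, and equals 0 otherwise. -/
open Matrix BigOperators

/- ### Auxiliary development -/

/-- Entrywise tensor product of `q` copies of 2×2 matrices. -/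
noncomputable def tens (q : ℕ) (M : Fin q → Matrix (Fin 2) (Fin 2) ℂ) :
    Matrix (Fin q → Fin 2) (Fin q → Fin 2) ℂ :=
  Matrix.of fun s t => ∏ j, M j (s j) (t j)

lemma tens_mul (q : ℕ) (M N : Fin q → Matrix (Fin 2) (Fin 2) ℂ) :
    tens q M * tens q N = tens q (fun j => M j * N j) := by
  ext s t
  simp only [tens, Matrix.mul_apply, Matrix.of_apply]
  rw [Finset.prod_univ_sum]
  simp only [Fintype.piFinset_univ]
  exact Finset.sum_congr rfl fun u _ => (Finset.prod_mul_distrib).symm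

def chi (q : ℕ) (a : Fin (q+1)) : Fin q → Fin 2 := fun p => if (p:ℕ)+1 = (a:ℕ) then 1 else 0

lemma chi_eq_iff (q : ℕ) (a b : Fin (q+1)) : chi q a = chi q b ↔ a = b := by
  constructor
  · intro h
    by_contra hne
    rcases Nat.eq_zero_or_pos (a : ℕ) with ha | ha
    · have hb : 0 < (b:ℕ) := by
        rcases Nat.eq_zero_or_pos (b:ℕ) with h0 | h0
        · exact absurd (Fin.ext (ha.trans h0.symm)) hne
        · exact h0
      have hp : (b:ℕ) - 1 < q := by omega
      have := congrFun h ⟨(b:ℕ)-1, hp⟩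
      simp only [chi] at this
      rw [if_neg (by omega), if_pos (by omega)] at this
      exact absurd this (by decide)
    · have hp : (a:ℕ) - 1 < q := by omega
      have := congrFun h ⟨(a:ℕ)-1, hp⟩
      simp only [chi] at this
      rw [if_pos (by omega), if_neg (fun hc => hne (Fin.ext (by omega)))] at this
      exact absurd this (by decide)
  · rintro rfl; rfl

lemma chi_zero (q : ℕ) : chi q 0 = fun _ => 0 := by
  funext p; simp [chi]

noncomputable def Umat (q : ℕ) (a b : Fin (q+1)) :
    Matrix (Fin q → Fin 2) (Fin q → Fin 2) ℂ :=
  Matrix.of fun s t => if s = chi q a ∧ t = chi q b then 1 else 0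

lemma Umat_mul (q : ℕ) (a b c d : Fin (q+1)) :
    Umat q a b * Umat q c d = if b = c then Umat q a d else 0 := by
  ext s t
  simp only [Umat, Matrix.mul_apply, Matrix.of_apply]
  rw [Finset.sum_eq_single (chi q b)]
  · by_cases hbc : b = c <;>
      by_cases hs : s = chi q a <;>
      by_cases ht : t = chi q d <;>
      simp [hbc, hs, ht, chi_eq_iff,
        apply_ite (fun M : Matrix (Fin q → Fin 2) (Fin q → Fin 2) ℂ => M s t)]
  · intro u _ hu
    simp [hu]
  · simp

lemma factor_mul (q : ℕ) (a b : Fin (q+1)) (p : Fin q) (x y : Fin 2) :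
    ((if ((p : ℕ) + 1 = (a : ℕ)) then J2 else (1 : Matrix (Fin 2) (Fin 2) ℂ)) * E11 *
     (if ((p : ℕ) + 1 = (b : ℕ)) then J2 else (1 : Matrix (Fin 2) (Fin 2) ℂ))) x y
    = if x = chi q a p ∧ y = chi q b p then 1 else 0 := by
  unfold chi
  by_cases h1 : (p:ℕ)+1 = (a:ℕ) <;> by_cases h2 : (p:ℕ)+1 = (b:ℕ)
  · simp only [if_pos h1, if_pos h2]
    fin_cases x <;> fin_cases y <;> simp [J2, E11, Matrix.mul_apply, Fin.sum_univ_two]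
  · simp only [if_pos h1, if_neg h2]
    fin_cases x <;> fin_cases y <;> simp [J2, E11, Matrix.mul_apply, Fin.sum_univ_two]
  · simp only [if_neg h1, if_pos h2]
    fin_cases x <;> fin_cases y <;> simp [J2, E11, Matrix.mul_apply, Fin.sum_univ_two]
  · simp only [if_neg h1, if_neg h2]
    fin_cases x <;> fin_cases y <;> simp [J2, E11, Matrix.mul_apply, Fin.sum_univ_two]

lemma block_eq (q : ℕ) (a b : Fin (q+1)) :
    Bq q a * Etens q * Bq q b = Umat q a b := by
  have h1 : Bq q a = tens q (fun p => if ((p:ℕ)+1 = (a:ℕ)) then J2 else 1) := rfl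
  have h2 : Etens q = tens q (fun _ => E11) := rfl
  have h3 : Bq q b = tens q (fun p => if ((p:ℕ)+1 = (b:ℕ)) then J2 else 1) := rfl
  rw [h1, h2, h3, tens_mul, tens_mul]
  ext s t
  simp only [tens, Umat, Matrix.of_apply]
  rw [Finset.prod_congr rfl fun p _ => factor_mul q a b p (s p) (t p), Finset.prod_boole]
  have hiff : (∀ p ∈ (Finset.univ : Finset (Fin q)), s p = chi q a p ∧ t p = chi q b p)
      ↔ (s = chi q a ∧ t = chi q b) := by
    simp [funext_iff, forall_and]
  simp only [hiff]

open scoped Classical in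
lemma prod_Umat (q : ℕ) (k : ℕ) (hk : 1 ≤ k) (a b : ℕ → Fin (q+1)) :
    (List.ofFn fun r : Fin k => Umat q (a r) (b r)).prod
    = if ∀ r, r + 1 < k → b r = a (r+1) then Umat q (a 0) (b (k-1)) else 0 := by
  induction k, hk using Nat.le_induction with
  | base =>
    simp only [List.ofFn_succ, List.ofFn_zero, List.prod_cons, List.prod_nil, mul_one]
    rw [if_pos (by omega)]
    rfl
  | succ n hn ih =>
    rw [List.ofFn_succ']
    simp only [List.concat_eq_append, List.prod_append, List.prod_cons, List.prod_nil, mul_one]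
    have : (List.ofFn fun r : Fin n => Umat q (a (Fin.castSucc r)) (b (Fin.castSucc r)))
        = (List.ofFn fun r : Fin n => Umat q (a r) (b r)) := by
      simp [Fin.coe_castSucc]
    rw [this, ih]
    by_cases hcond : ∀ r, r + 1 < n → b r = a (r+1)
    · rw [if_pos hcond]
      rw [Umat_mul]
      simp only [Fin.val_last]
      have h1 : (n-1) + 1 = n := by omega
      by_cases hlast : b (n-1) = a n
      · rw [if_pos hlast, if_pos (by
          intro r hr
          rcases Nat.lt_or_ge (r+1) n with h | h
          · exact hcond r h
          · have hr1 : r = n - 1 := by omega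
            subst hr1
            rw [h1]; exact hlast)]
        norm_num
      · rw [if_neg hlast, if_neg (by
          intro hall
          exact hlast (by have := hall (n-1) (by omega); rwa [h1] at this))]
    · rw [if_neg hcond, if_neg (fun hall => hcond fun r hr => hall r (by omega)), zero_mul]

open scoped Classical in
/-- The `((0,…,0),(0,…,0))` entry of `B_{i₁} E B_{i₂} B_{i₃} E B_{i₄} ⋯ B_{i_{2k−1}} E B_{i_{2k}}`
(equivalently the value of `η^{⊗q}` on this product, where `η` picks the upper-left entry of a
2×2 matrix) equals `1` if `i₁ = 0`, `i_{2k} = 0` and `i_{2r} = i_{2r+1}` for every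
`r = 1,…,k−1`, and equals `0` otherwise. -/
theorem corner_entry_of_alternating_product (q k : ℕ) (hq : 1 ≤ q) (hk : 1 ≤ k)
    (i : ℕ → Fin (q + 1)) :
    ((List.ofFn fun r : Fin k =>
        Bq q (i (2 * (r : ℕ) + 1)) * Etens q * Bq q (i (2 * (r : ℕ) + 2))).prod)
      (fun _ => 0) (fun _ => 0)
    = if (i 1 = 0 ∧ i (2 * k) = 0 ∧ ∀ r ∈ Finset.Icc 1 (k - 1), i (2 * r) = i (2 * r + 1))
      then 1 else 0 := by
  have hblock : (List.ofFn fun r : Fin k =>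
        Bq q (i (2 * (r : ℕ) + 1)) * Etens q * Bq q (i (2 * (r : ℕ) + 2)))
      = (List.ofFn fun r : Fin k =>
        Umat q ((fun m => i (2 * m + 1)) (r : ℕ)) ((fun m => i (2 * m + 2)) (r : ℕ))) := by
    simp only [block_eq]
  rw [hblock, prod_Umat q k hk (fun m => i (2 * m + 1)) (fun m => i (2 * m + 2))]
  have e2 : 2 * (k - 1) + 2 = 2 * k := by omega
  rw [e2]
  have hC : (∀ r, r + 1 < k → i (2 * r + 2) = i (2 * (r + 1) + 1))
      ↔ (∀ r ∈ Finset.Icc 1 (k - 1), i (2 * r) = i (2 * r + 1)) := by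
    constructor
    · intro h r hr
      rw [Finset.mem_Icc] at hr
      have := h (r - 1) (by omega)
      rw [show 2 * (r - 1) + 2 = 2 * r by omega,
        show 2 * ((r - 1) + 1) + 1 = 2 * r + 1 by omega] at this
      exact this
    · intro h r hr
      have := h (r + 1) (Finset.mem_Icc.2 (by omega))
      rwa [show 2 * (r + 1) = 2 * r + 2 by omega] at this
  rw [apply_ite (fun M : Matrix (Fin q → Fin 2) (Fin q → Fin 2) ℂ =>
    M (fun _ => 0) (fun _ => 0))]
  simp only [Umat, Matrix.of_apply, Matrix.zero_apply]
  have hzero : (fun _ : Fin q => (0 : Fin 2)) = chi q 0 := (chi_zero q).symm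
  rw [hzero]
  simp only [chi_eq_iff, eq_comm (a := (0 : Fin (q+1)))]
  by_cases hA : i (2 * 0 + 1) = 0 <;>
    by_cases hB : i (2 * k) = 0 <;>
    by_cases hCc : ∀ r ∈ Finset.Icc 1 (k - 1), i (2 * r) = i (2 * r + 1) <;>
    simp_all [hC, show 2 * 0 + 1 = 1 from rfl]
end

section
/- (Tensor model for cyclic monotone independence.) Let C be a unital ℂ-algebra, let B ⊆ C be a unital subalgebra, let ω, τ : C → ℂ be linear maps, let a₁, …, a_p ∈ C, and let b₀, b₁, …, b_q ∈ B with b₀ = 1. Assume: (i) τ(1) = 1, τ(b_i) = 0 for 1 ≤ i ≤ q, and τ(b_i b_j) = δ_{ij} for 1 ≤ i, j ≤ q; (ii) the pair is cyclically monotone: for every m ≥ 1, j₁, …, j_m ∈ {1,…,p}, and c₀, c₁, …, c_m ∈ B, one has ω(c₀ a_{j₁} c₁ a_{j₂} c₂ ⋯ a_{j_m} c_m) = ω(a_{j₁} ⋯ a_{j_m}) τ(c₁) ⋯ τ(c_{m−1}) τ(c_m c₀); (iii) there are matrices A₁, …, A_p ∈ M_n(ℂ) with ω(a_{j₁} ⋯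 a_{j_m}) = Tr(A_{j₁} ⋯ A_{j_m}) for all m ≥ 1 and j₁,…,j_m ∈ {1,…,p}. Given coefficients λ_{i₁,i₂,j} ∈ ℂ (0 ≤ i₁, i₂ ≤ q, 1 ≤ j ≤ p), set P = Σ_{i₁,i₂,j} λ_{i₁,i₂,j} b_{i₁} a_j b_{i₂} ∈ C and P̃ = Σ_{i₁,i₂,j} λ_{i₁,i₂,j} (I_n ⊗ B_{i₁}) (A_j ⊗ E) (I_n ⊗ B_{i₂}) ∈ M_n(ℂ) ⊗ M_{2^q}(ℂ). Then for every k ≥ 1, ω(P^k) = Tr(P̃^k), where Tr is the non-normalized trace on M_n(ℂ) ⊗ M_{2^q}(ℂ). -/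
open Matrix BigOperators

open Kronecker

def zv (q : ℕ) : Fin q → Fin 2 := fun _ => 0

def evv (q : ℕ) (i : Fin (q + 1)) : Fin q → Fin 2 := fun m => if (m : ℕ) + 1 = (i : ℕ) then 1 else 0

lemma E11_apply (x y : Fin 2) : E11 x y = if x = 0 ∧ y = 0 then 1 else 0 := by
  fin_cases x <;> fin_cases y <;> simp [E11]

lemma myProdBoole {q : ℕ} (P : Fin q → Prop) [DecidablePred P] :
    (∏ m : Fin q, if P m then (1 : ℂ) else 0) = if ∀ m, P m then 1 else 0 := by
  by_cases h : ∀ m, P m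
  · rw [if_pos h]; exact Finset.prod_eq_one fun m _ => if_pos (h m)
  · rw [if_neg h]; push_neg at h; obtain ⟨m, hm⟩ := h
    exact Finset.prod_eq_zero (Finset.mem_univ m) (if_neg hm)

lemma Etens_apply (q : ℕ) (s t : Fin q → Fin 2) :
    Etens q s t = if s = zv q ∧ t = zv q then 1 else 0 := by
  simp only [Etens, Matrix.of_apply, E11_apply]
  rw [myProdBoole]
  exact if_congr (by simp [zv, funext_iff, forall_and]) rfl rfl

lemma Bq_zv_left (q : ℕ) (i : Fin (q + 1)) (u : Fin q → Fin 2) :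
    Bq q i (zv q) u = if u = evv q i then 1 else 0 := by
  have hJ : ∀ x : Fin 2, J2 0 x = if x = 1 then 1 else 0 := by
    intro x; fin_cases x <;> simp [J2]
  have h1 : ∀ x : Fin 2, (1 : Matrix (Fin 2) (Fin 2) ℂ) 0 x = if x = 0 then 1 else 0 := by
    intro x; fin_cases x <;> simp [Matrix.one_apply]
  have key : ∀ m : Fin q, (if ((m : ℕ) + 1 = (i : ℕ)) then J2 else 1) (zv q m) (u m)
      = if u m = evv q i m then 1 else 0 := by
    intro m
    by_cases h : (m : ℕ) + 1 = (i : ℕ)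
    · simp [h, evv, zv, hJ]
    · simp [h, evv, zv, Matrix.one_apply, eq_comm]
  simp only [Bq, Matrix.of_apply, key]
  rw [myProdBoole]
  exact if_congr (by simp [funext_iff]) rfl rfl

lemma Bq_zv_right (q : ℕ) (i : Fin (q + 1)) (u : Fin q → Fin 2) :
    Bq q i u (zv q) = if u = evv q i then 1 else 0 := by
  have hJ : ∀ x : Fin 2, J2 x 0 = if x = 1 then 1 else 0 := by
    intro x; fin_cases x <;> simp [J2]
  have h1 : ∀ x : Fin 2, (1 : Matrix (Fin 2) (Fin 2) ℂ) x 0 = if x = 0 then 1 else 0 := by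
    intro x; fin_cases x <;> simp [Matrix.one_apply]
  have key : ∀ m : Fin q, (if ((m : ℕ) + 1 = (i : ℕ)) then J2 else 1) (u m) (zv q m)
      = if u m = evv q i m then 1 else 0 := by
    intro m
    by_cases h : (m : ℕ) + 1 = (i : ℕ)
    · simp [h, evv, zv, hJ]
    · simp [h, evv, zv, Matrix.one_apply]
      exact if_congr Iff.rfl rfl rfl
  simp only [Bq, Matrix.of_apply, key]
  rw [myProdBoole]
  exact if_congr (by simp [funext_iff]) rfl rfl

lemma evv_inj {q : ℕ} {i j : Fin (q + 1)} (h : evv q i = evv q j) : i = j := by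
  by_contra hne
  rcases Nat.eq_zero_or_pos (i : ℕ) with hi | hi
  · rcases Nat.eq_zero_or_pos (j : ℕ) with hj | hj
    · exact hne (Fin.ext (by omega))
    · have hm : (j : ℕ) - 1 < q := by omega
      have := congrFun h ⟨(j : ℕ) - 1, hm⟩
      simp only [evv] at this
      rw [if_neg (by omega), if_pos (by omega)] at this
      exact absurd this (by decide)
  · have hm : (i : ℕ) - 1 < q := by omega
    have := congrFun h ⟨(i : ℕ) - 1, hm⟩
    simp only [evv] at this
    rw [if_pos (by omega)] at this
    by_cases hj : (i : ℕ) - 1 + 1 = (j : ℕ)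
    · exact hne (Fin.ext (by omega))
    · rw [if_neg hj] at this; exact absurd this (by decide)

lemma Bq_mul_Bq_zv (q : ℕ) (i j : Fin (q + 1)) :
    (Bq q i * Bq q j) (zv q) (zv q) = if i = j then 1 else 0 := by
  rw [Matrix.mul_apply]
  simp only [Bq_zv_left, Bq_zv_right, ite_mul, one_mul, zero_mul]
  rw [Finset.sum_ite_eq' Finset.univ (evv q i) (fun u => if u = evv q j then (1:ℂ) else 0)]
  simp only [Finset.mem_univ, if_true]
  exact if_congr ⟨evv_inj, fun h => h ▸ rfl⟩ rfl rfl

lemma Etens_mul_apply (q : ℕ) (X : Matrix (Fin q → Fin 2) (Fin q → Fin 2) ℂ)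
    (s t : Fin q → Fin 2) :
    (Etens q * X) s t = if s = zv q then X (zv q) t else 0 := by
  rw [Matrix.mul_apply]
  simp only [Etens_apply]
  by_cases hs : s = zv q <;> simp [hs, ite_mul, Finset.sum_ite_eq]

lemma mul_Etens_apply (q : ℕ) (X : Matrix (Fin q → Fin 2) (Fin q → Fin 2) ℂ)
    (s t : Fin q → Fin 2) :
    (X * Etens q) s t = if t = zv q then X s (zv q) else 0 := by
  rw [Matrix.mul_apply]
  simp only [Etens_apply]
  by_cases ht : t = zv q <;> simp [ht, mul_ite, Finset.sum_ite_eq']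

lemma trace_Etens_mul (q : ℕ) (X : Matrix (Fin q → Fin 2) (Fin q → Fin 2) ℂ) :
    Matrix.trace (Etens q * X) = X (zv q) (zv q) := by
  simp [Matrix.trace, Matrix.diag, Etens_mul_apply, Finset.sum_ite_eq]

lemma Etens_mul_mul_Etens (q : ℕ) (X : Matrix (Fin q → Fin 2) (Fin q → Fin 2) ℂ) :
    Etens q * X * Etens q = X (zv q) (zv q) • Etens q := by
  ext s t
  by_cases hs : s = zv q <;> by_cases ht : t = zv q <;>
    simp [mul_Etens_apply, Etens_mul_apply, Etens_apply, hs, ht]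


section lists
variable {R : Type*} [Semiring R] {M : Type*} [Monoid M]

lemma sum_pow_ofFn {ι : Type*} [Fintype ι] (f : ι → R) :
    ∀ k : ℕ, (∑ i, f i) ^ k = ∑ g : Fin k → ι, (List.ofFn fun r => f (g r)).prod := by
  intro k
  induction k with
  | zero => simp
  | succ k ih =>
    rw [pow_succ', ih, Finset.sum_mul_sum]
    rw [← Fintype.sum_prod_type']
    refine Fintype.sum_equiv (Fin.consEquiv fun _ => ι) _ _ ?_
    intro x
    rw [List.ofFn_succ, List.prod_cons]
    simp [Fin.consEquiv]

lemma ofFn_smul_prod {A : Type*} [Ring A] [Algebra ℂ A] :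
    ∀ (k : ℕ) (c : Fin k → ℂ) (w : Fin k → A),
      (List.ofFn fun r => c r • w r).prod = (∏ r, c r) • (List.ofFn w).prod := by
  intro k
  induction k with
  | zero => simp
  | succ k ih =>
    intro c w
    rw [List.ofFn_succ, List.prod_cons, List.ofFn_succ, List.prod_cons,
      ih (fun r => c r.succ) (fun r => w r.succ), smul_mul_smul_comm,
      Fin.prod_univ_succ]

lemma telescope_prod (u v x : ℕ → M) :
    ∀ k : ℕ, (List.ofFn fun r : Fin k => u (r : ℕ) * x (r : ℕ) * v (r : ℕ)).prod * u k
      = u 0 * (List.ofFn fun r : Fin k => x (r : ℕ) * (v (r : ℕ) * u ((r : ℕ) + 1))).prod := by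
  intro k
  induction k with
  | zero => simp
  | succ k ih =>
    rw [List.ofFn_succ', List.ofFn_succ' (f := fun r : Fin (k+1) => x (r : ℕ) * (v (r : ℕ) * u ((r : ℕ) + 1)))]
    simp only [List.concat_eq_append, List.prod_append, List.prod_cons, List.prod_nil,
      Fin.coe_castSucc, Fin.val_last, mul_one]
    rw [mul_assoc _ _ (u (k + 1)), mul_assoc (u k) _ _, mul_assoc (u k) _ _, ← mul_assoc _ (u k) _,
      ih]
    ring_nf
    rw [mul_assoc, mul_assoc]
end lists


lemma ofFn_kronecker_prod {n : ℕ} {m : Type*} [Fintype m] [DecidableEq m] :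
    ∀ (k : ℕ) (X : Fin k → Matrix (Fin n) (Fin n) ℂ) (Y : Fin k → Matrix m m ℂ),
      (List.ofFn fun r => X r ⊗ₖ Y r).prod = (List.ofFn X).prod ⊗ₖ (List.ofFn Y).prod := by
  intro k
  induction k with
  | zero => simp [Matrix.one_kronecker_one]
  | succ k ih =>
    intro X Y
    rw [List.ofFn_succ, List.prod_cons, List.ofFn_succ, List.prod_cons,
      List.ofFn_succ (f := Y), List.prod_cons, ih, Matrix.mul_kronecker_mul]

lemma Nprod_collapse (q : ℕ) (i₁ i₂ : ℕ → Fin (q + 1)) :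
    ∀ k : ℕ, 1 ≤ k →
      (List.ofFn fun r : Fin k => Bq q (i₁ (r : ℕ)) * Etens q * Bq q (i₂ (r : ℕ))).prod
        = (∏ r ∈ Finset.Icc 1 (k - 1), if i₂ (r - 1) = i₁ r then (1 : ℂ) else 0)
            • (Bq q (i₁ 0) * Etens q * Bq q (i₂ (k - 1))) := by
  intro k
  induction k with
  | zero => omega
  | succ k ih =>
    intro _
    rcases Nat.eq_zero_or_pos k with rfl | hk
    · simp
    rw [List.ofFn_succ']
    simp only [List.concat_eq_append, List.prod_append, List.prod_cons, List.prod_nil,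
      Fin.coe_castSucc, Fin.val_last, mul_one]
    rw [ih hk]
    have hmid : Etens q * (Bq q (i₂ (k - 1)) * Bq q (i₁ k)) * Etens q
        = ((if i₂ (k - 1) = i₁ k then (1 : ℂ) else 0)) • Etens q := by
      rw [Etens_mul_mul_Etens, Bq_mul_Bq_zv]
    have key : (Bq q (i₁ 0) * Etens q * Bq q (i₂ (k - 1))) * (Bq q (i₁ k) * Etens q * Bq q (i₂ k))
        = (if i₂ (k - 1) = i₁ k then (1 : ℂ) else 0)
            • (Bq q (i₁ 0) * Etens q * Bq q (i₂ k)) := by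
      have : (Bq q (i₁ 0) * Etens q * Bq q (i₂ (k - 1))) * (Bq q (i₁ k) * Etens q * Bq q (i₂ k))
          = Bq q (i₁ 0) * (Etens q * (Bq q (i₂ (k - 1)) * Bq q (i₁ k)) * Etens q) * Bq q (i₂ k) := by
        noncomm_ring
      rw [this, hmid, Matrix.mul_smul, Matrix.smul_mul]
    rw [smul_mul_assoc, key, smul_smul]
    have harith : k + 1 - 1 = k := rfl
    rw [harith]
    obtain ⟨m, rfl⟩ : ∃ m, k = m + 1 := ⟨k - 1, by omega⟩
    rw [Finset.prod_Icc_succ_top (by omega)]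
    simp

section core
open Matrix BigOperators Kronecker

variable {C : Type*} [Ring C] [Algebra ℂ C]

lemma tau_bb (Bsub : Subalgebra ℂ C) (τ : C →ₗ[ℂ] ℂ) (q : ℕ) (b : Fin (q + 1) → C)
    (hb0 : b 0 = 1) (hτ1 : τ 1 = 1)
    (hτb : ∀ i : Fin (q + 1), i ≠ 0 → τ (b i) = 0)
    (hτbb : ∀ i j : Fin (q + 1), i ≠ 0 → j ≠ 0 → τ (b i * b j) = if i = j then 1 else 0)
    (i j : Fin (q + 1)) : τ (b i * b j) = if i = j then 1 else 0 := by
  by_cases hi : i = 0 <;> by_cases hj : j = 0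
  · subst hi; subst hj; rw [hb0, mul_one, hτ1, if_pos rfl]
  · subst hi; rw [hb0, one_mul, hτb j hj, if_neg (fun h => hj h.symm)]
  · subst hj; rw [hb0, mul_one, hτb i hi, if_neg hi]
  · exact hτbb i j hi hj

lemma core_identity (Bsub : Subalgebra ℂ C) (ω τ : C →ₗ[ℂ] ℂ)
    (p q n : ℕ) (a : Fin p → C) (b : Fin (q + 1) → C)
    (hb0 : b 0 = 1) (hbB : ∀ i, b i ∈ Bsub)
    (hτ1 : τ 1 = 1)
    (hτb : ∀ i : Fin (q + 1), i ≠ 0 → τ (b i) = 0)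
    (hτbb : ∀ i j : Fin (q + 1), i ≠ 0 → j ≠ 0 →
      τ (b i * b j) = if i = j then 1 else 0)
    (hcyc : ∀ m : ℕ, 1 ≤ m → ∀ (j : ℕ → Fin p) (c : ℕ → C), (∀ r, c r ∈ Bsub) →
      ω (c 0 * (List.ofFn fun r : Fin m => a (j ((r : ℕ) + 1)) * c ((r : ℕ) + 1)).prod)
        = ω ((List.ofFn fun r : Fin m => a (j ((r : ℕ) + 1))).prod)
          * (∏ r ∈ Finset.Icc 1 (m - 1), τ (c r)) * τ (c m * c 0))
    (A : Fin p → Matrix (Fin n) (Fin n) ℂ)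
    (hA : ∀ m : ℕ, 1 ≤ m → ∀ j : ℕ → Fin p,
      ω ((List.ofFn fun r : Fin m => a (j ((r : ℕ) + 1))).prod)
        = Matrix.trace ((List.ofFn fun r : Fin m => A (j ((r : ℕ) + 1))).prod))
    (ι₁ ι₂ : ℕ → Fin (q + 1)) (jx : ℕ → Fin p) (k : ℕ) (hk : 1 ≤ k) :
    ω (List.ofFn fun r : Fin k => b (ι₁ (r : ℕ)) * a (jx (r : ℕ)) * b (ι₂ (r : ℕ))).prod
      = Matrix.trace (List.ofFn fun r : Fin k =>
          ((1 : Matrix (Fin n) (Fin n) ℂ) ⊗ₖ Bq q (ι₁ (r : ℕ)))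
            * (A (jx (r : ℕ)) ⊗ₖ Etens q)
            * ((1 : Matrix (Fin n) (Fin n) ℂ) ⊗ₖ Bq q (ι₂ (r : ℕ)))).prod := by
  have hk0 : 0 < k := hk
  set U : ℕ → C := fun s => if s < k then b (ι₁ s) else 1 with hU
  set V : ℕ → C := fun s => b (ι₂ s) with hV
  set x : ℕ → C := fun s => a (jx s) with hx
  set c : ℕ → C := fun s => if s = 0 then U 0 else V (s - 1) * U s with hc
  set jn : ℕ → Fin p := fun s => jx (s - 1) with hjn
  -- ω side
  have h1 : (List.ofFn fun r : Fin k => b (ι₁ (r : ℕ)) * a (jx (r : ℕ)) * b (ι₂ (r : ℕ))).prod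
      = (List.ofFn fun r : Fin k => U (r : ℕ) * x (r : ℕ) * V (r : ℕ)).prod * U k := by
    have hUk : U k = 1 := by simp [hU]
    rw [hUk, mul_one]
    have hf : (fun r : Fin k => b (ι₁ (r : ℕ)) * a (jx (r : ℕ)) * b (ι₂ (r : ℕ)))
        = fun r : Fin k => U (r : ℕ) * x (r : ℕ) * V (r : ℕ) := by
      funext r; simp [hU, hV, hx, r.isLt]
    rw [hf]
  have h2 := telescope_prod U V x k
  have h3 : U 0 * (List.ofFn fun r : Fin k => x (r : ℕ) * (V (r : ℕ) * U ((r : ℕ) + 1))).prod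
      = c 0 * (List.ofFn fun r : Fin k => a (jn ((r : ℕ) + 1)) * c ((r : ℕ) + 1)).prod := by
    have hg : (fun r : Fin k => x (r : ℕ) * (V (r : ℕ) * U ((r : ℕ) + 1)))
        = fun r : Fin k => a (jn ((r : ℕ) + 1)) * c ((r : ℕ) + 1) := by
      funext r; simp [hc, hjn, hx]
    have hc0 : c 0 = U 0 := by simp [hc]
    rw [hg, hc0]
  have hcmem : ∀ r, c r ∈ Bsub := by
    intro r
    rcases r with _ | s
    · simp only [hc, hU, if_pos rfl, hk0]
      simp [hk0]
      exact hbB _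
    · simp only [hc, hV, hU]
      rw [if_neg (Nat.succ_ne_zero s)]
      refine mul_mem (hbB _) ?_
      split
      · exact hbB _
      · exact one_mem _
  have hωword : ω (List.ofFn fun r : Fin k => b (ι₁ (r : ℕ)) * a (jx (r : ℕ)) * b (ι₂ (r : ℕ))).prod
      = ω ((List.ofFn fun r : Fin k => a (jn ((r : ℕ) + 1))).prod)
          * (∏ r ∈ Finset.Icc 1 (k - 1), τ (c r)) * τ (c k * c 0) := by
    rw [h1, h2, h3, hcyc k hk jn c hcmem]
  -- evaluate the τ factors
  have hτc : ∀ r ∈ Finset.Icc 1 (k - 1), τ (c r) = if ι₂ (r - 1) = ι₁ r then (1 : ℂ) else 0 := by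
    intro r hr
    rw [Finset.mem_Icc] at hr
    have hr1 : r ≠ 0 := by omega
    have hrk : r < k := by omega
    have : c r = b (ι₂ (r - 1)) * b (ι₁ r) := by
      simp only [hc, hV, hU, if_neg hr1, if_pos hrk]
    rw [this, tau_bb Bsub τ q b hb0 hτ1 hτb hτbb]
  have hτlast : τ (c k * c 0) = if ι₂ (k - 1) = ι₁ 0 then (1 : ℂ) else 0 := by
    have hck : c k = b (ι₂ (k - 1)) := by
      simp only [hc, hV, hU]
      rw [if_neg (by omega), if_neg (by omega), mul_one]
    have hc0 : c 0 = b (ι₁ 0) := by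
      simp only [hc, hU, if_pos rfl, if_pos hk0]
    rw [hck, hc0, tau_bb Bsub τ q b hb0 hτ1 hτb hτbb]
  -- matrix side
  have m1 : (List.ofFn fun r : Fin k =>
          ((1 : Matrix (Fin n) (Fin n) ℂ) ⊗ₖ Bq q (ι₁ (r : ℕ)))
            * (A (jx (r : ℕ)) ⊗ₖ Etens q)
            * ((1 : Matrix (Fin n) (Fin n) ℂ) ⊗ₖ Bq q (ι₂ (r : ℕ)))).prod
      = (List.ofFn fun r : Fin k => A (jx (r : ℕ))).prod
          ⊗ₖ (List.ofFn fun r : Fin k => Bq q (ι₁ (r : ℕ)) * Etens q * Bq q (ι₂ (r : ℕ))).prod := by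
    rw [← ofFn_kronecker_prod]
    have hf : (fun r : Fin k =>
          ((1 : Matrix (Fin n) (Fin n) ℂ) ⊗ₖ Bq q (ι₁ (r : ℕ)))
            * (A (jx (r : ℕ)) ⊗ₖ Etens q)
            * ((1 : Matrix (Fin n) (Fin n) ℂ) ⊗ₖ Bq q (ι₂ (r : ℕ))))
        = fun r : Fin k => A (jx (r : ℕ)) ⊗ₖ (Bq q (ι₁ (r : ℕ)) * Etens q * Bq q (ι₂ (r : ℕ))) := by
      funext r
      rw [← Matrix.mul_kronecker_mul, ← Matrix.mul_kronecker_mul, one_mul, mul_one]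
    rw [hf]
  have m2 : Matrix.trace (Bq q (ι₁ 0) * Etens q * Bq q (ι₂ (k - 1)))
      = if ι₂ (k - 1) = ι₁ 0 then (1 : ℂ) else 0 := by
    rw [Matrix.trace_mul_cycle, Matrix.trace_mul_cycle, mul_assoc, trace_Etens_mul,
      Bq_mul_Bq_zv]
  have hAlist : (List.ofFn fun r : Fin k => A (jn ((r : ℕ) + 1))).prod
      = (List.ofFn fun r : Fin k => A (jx (r : ℕ))).prod := by
    have hf : (fun r : Fin k => A (jn ((r : ℕ) + 1))) = fun r : Fin k => A (jx (r : ℕ)) := by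
      funext r; simp [hjn]
    rw [hf]
  rw [hωword, hA k hk jn, hAlist, m1, Nprod_collapse q ι₁ ι₂ k hk,
    Matrix.kronecker_smul, Matrix.trace_smul, Matrix.trace_kronecker, m2,
    Finset.prod_congr rfl hτc, hτlast]
  simp only [smul_eq_mul]
  ring
end core

/-- Tensor model for cyclic monotone independence: if the pair formed by the `a_j` and the
unital subalgebra `B` (containing the `b_i`) is cyclically monotone with respect to `(τ, ω)`,
the `b_i` (for `i ≥ 1`) are τ-centred and τ-orthonormal, and the `a_j` have the same
joint distribution under `ω` as matrices `A_j` under the non-normalized trace, then for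
`P = Σ λ_{i₁,i₂,j} b_{i₁} a_j b_{i₂}` and
`P̃ = Σ λ_{i₁,i₂,j} (I_n ⊗ B_{i₁})(A_j ⊗ E)(I_n ⊗ B_{i₂})` one has
`ω(P^k) = Tr(P̃^k)` for all `k ≥ 1`. -/
theorem tensor_model_cyclic_monotone {C : Type*} [Ring C] [Algebra ℂ C]
    (Bsub : Subalgebra ℂ C) (ω τ : C →ₗ[ℂ] ℂ)
    (p q n : ℕ) (a : Fin p → C) (b : Fin (q + 1) → C)
    (hb0 : b 0 = 1) (hbB : ∀ i, b i ∈ Bsub)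
    (hτ1 : τ 1 = 1)
    (hτb : ∀ i : Fin (q + 1), i ≠ 0 → τ (b i) = 0)
    (hτbb : ∀ i j : Fin (q + 1), i ≠ 0 → j ≠ 0 →
      τ (b i * b j) = if i = j then 1 else 0)
    (hcyc : ∀ m : ℕ, 1 ≤ m → ∀ (j : ℕ → Fin p) (c : ℕ → C), (∀ r, c r ∈ Bsub) →
      ω (c 0 * (List.ofFn fun r : Fin m => a (j ((r : ℕ) + 1)) * c ((r : ℕ) + 1)).prod)
        = ω ((List.ofFn fun r : Fin m => a (j ((r : ℕ) + 1))).prod)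
          * (∏ r ∈ Finset.Icc 1 (m - 1), τ (c r)) * τ (c m * c 0))
    (A : Fin p → Matrix (Fin n) (Fin n) ℂ)
    (hA : ∀ m : ℕ, 1 ≤ m → ∀ j : ℕ → Fin p,
      ω ((List.ofFn fun r : Fin m => a (j ((r : ℕ) + 1))).prod)
        = Matrix.trace ((List.ofFn fun r : Fin m => A (j ((r : ℕ) + 1))).prod))
    (lam : Fin (q + 1) → Fin (q + 1) → Fin p → ℂ)
    (k : ℕ) (hk : 1 ≤ k) :
    ω ((∑ i₁ : Fin (q + 1), ∑ i₂ : Fin (q + 1), ∑ j : Fin p,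
          lam i₁ i₂ j • (b i₁ * a j * b i₂)) ^ k)
      = Matrix.trace ((∑ i₁ : Fin (q + 1), ∑ i₂ : Fin (q + 1), ∑ j : Fin p,
          lam i₁ i₂ j •
            (Matrix.kroneckerMap (· * ·) (1 : Matrix (Fin n) (Fin n) ℂ) (Bq q i₁)
              * Matrix.kroneckerMap (· * ·) (A j) (Etens q)
              * Matrix.kroneckerMap (· * ·) (1 : Matrix (Fin n) (Fin n) ℂ) (Bq q i₂))) ^ k) := by
  classical
  have hk0 : 0 < k := hk
  have hL : (∑ t : Fin (q + 1) × Fin (q + 1) × Fin p,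
        lam t.1 t.2.1 t.2.2 • (b t.1 * a t.2.2 * b t.2.1))
      = ∑ i₁ : Fin (q + 1), ∑ i₂ : Fin (q + 1), ∑ j : Fin p,
          lam i₁ i₂ j • (b i₁ * a j * b i₂) := by
    rw [Fintype.sum_prod_type]
    exact Finset.sum_congr rfl fun i₁ _ => Fintype.sum_prod_type _
  have hR : (∑ t : Fin (q + 1) × Fin (q + 1) × Fin p,
        lam t.1 t.2.1 t.2.2 •
          (((1 : Matrix (Fin n) (Fin n) ℂ) ⊗ₖ Bq q t.1)
            * (A t.2.2 ⊗ₖ Etens q)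
            * ((1 : Matrix (Fin n) (Fin n) ℂ) ⊗ₖ Bq q t.2.1)))
      = ∑ i₁ : Fin (q + 1), ∑ i₂ : Fin (q + 1), ∑ j : Fin p,
          lam i₁ i₂ j •
            (Matrix.kroneckerMap (· * ·) (1 : Matrix (Fin n) (Fin n) ℂ) (Bq q i₁)
              * Matrix.kroneckerMap (· * ·) (A j) (Etens q)
              * Matrix.kroneckerMap (· * ·) (1 : Matrix (Fin n) (Fin n) ℂ) (Bq q i₂)) := by
    rw [Fintype.sum_prod_type]
    exact Finset.sum_congr rfl fun i₁ _ => Fintype.sum_prod_type _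
  rw [← hL, ← hR, sum_pow_ofFn, sum_pow_ofFn, map_sum, Matrix.trace_sum]
  refine Finset.sum_congr rfl fun g _ => ?_
  rw [ofFn_smul_prod k (fun r => lam (g r).1 (g r).2.1 (g r).2.2)
        (fun r => b (g r).1 * a (g r).2.2 * b (g r).2.1),
      ofFn_smul_prod k (fun r => lam (g r).1 (g r).2.1 (g r).2.2)
        (fun r => ((1 : Matrix (Fin n) (Fin n) ℂ) ⊗ₖ Bq q (g r).1)
            * (A (g r).2.2 ⊗ₖ Etens q)
            * ((1 : Matrix (Fin n) (Fin n) ℂ) ⊗ₖ Bq q (g r).2.1)),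
      _root_.map_smul, Matrix.trace_smul]
  congr 1
  have hcore := core_identity Bsub ω τ p q n a b hb0 hbB hτ1 hτb hτbb hcyc A hA
    (fun s => (g (if h : s < k then ⟨s, h⟩ else ⟨0, hk0⟩)).1)
    (fun s => (g (if h : s < k then ⟨s, h⟩ else ⟨0, hk0⟩)).2.1)
    (fun s => (g (if h : s < k then ⟨s, h⟩ else ⟨0, hk0⟩)).2.2) k hk
  have hfn : ∀ r : Fin k, (if h : (r : ℕ) < k then (⟨(r : ℕ), h⟩ : Fin k) else ⟨0, hk0⟩) = r := by
    intro r; simp [r.isLt]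
  have e1 : (fun r : Fin k =>
        b ((g (if h : (r : ℕ) < k then ⟨(r : ℕ), h⟩ else ⟨0, hk0⟩)).1)
          * a ((g (if h : (r : ℕ) < k then ⟨(r : ℕ), h⟩ else ⟨0, hk0⟩)).2.2)
          * b ((g (if h : (r : ℕ) < k then ⟨(r : ℕ), h⟩ else ⟨0, hk0⟩)).2.1))
      = fun r : Fin k => b (g r).1 * a (g r).2.2 * b (g r).2.1 := by
    funext r; rw [hfn r]
  have e2 : (fun r : Fin k =>
        ((1 : Matrix (Fin n) (Fin n) ℂ)
            ⊗ₖ Bq q ((g (if h : (r : ℕ) < k then ⟨(r : ℕ), h⟩ else ⟨0, hk0⟩)).1))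
          * (A ((g (if h : (r : ℕ) < k then ⟨(r : ℕ), h⟩ else ⟨0, hk0⟩)).2.2) ⊗ₖ Etens q)
          * ((1 : Matrix (Fin n) (Fin n) ℂ)
            ⊗ₖ Bq q ((g (if h : (r : ℕ) < k then ⟨(r : ℕ), h⟩ else ⟨0, hk0⟩)).2.1)))
      = fun r : Fin k =>
          ((1 : Matrix (Fin n) (Fin n) ℂ) ⊗ₖ Bq q (g r).1)
            * (A (g r).2.2 ⊗ₖ Etens q)
            * ((1 : Matrix (Fin n) (Fin n) ℂ) ⊗ₖ Bq q (g r).2.1) := by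
    funext r; rw [hfn r]
  rw [e1, e2] at hcore
  exact hcore
end

section
/- (The ideal J annihilates the cyclic monotone product.) Let C be a unital ℂ-algebra, let A be a subalgebra and B a unital subalgebra of C, and let ω, τ : C → ℂ be linear maps satisfying the cyclic monotone factorization rule: for every m ≥ 1, a₁, …, a_m ∈ A, and c₀, c₁, …, c_m ∈ B, ω(c₀ a₁ c₁ a₂ c₂ ⋯ a_m c_m) = ω(a₁ ⋯ a_m) τ(c₁) ⋯ τ(c_{m−1}) τ(c_m c₀). Let x = c₀ a₁ c₁ ⋯ a_n c_n with n ≥ 2, a₁,…,a_n ∈ A, c₀,…,c_n ∈ B, and τ(c_r) = 0 for every r = 1, …, n−1. Then ω(x) = 0, and moreover ω(x y) = 0 and ω(y x) = 0 for every element y of the form y = c′₀ a′₁ c′₁ ⋯ a′_m c′_m with m ≥ 1, a′₁,…,a′_m ∈ A and c′₀,…,c′_m ∈ B. -/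
open BigOperators

/-- Concatenating two alternating words `c₀ a₁ c₁ ⋯ a_n c_n` and `c'₀ a'₁ c'₁ ⋯ a'_m c'_m`
gives the alternating word of length `n + m` with glued letter functions `A`, `Cc`. -/
lemma word_mul_concat {M : Type*} [Monoid M] (n m : ℕ) (hn : 1 ≤ n)
    (a c a' c' A Cc : ℕ → M)
    (hA1 : ∀ r, 1 ≤ r → r ≤ n → A r = a r)
    (hA2 : ∀ r, 1 ≤ r → r ≤ m → A (n + r) = a' r)
    (hC0 : Cc 0 = c 0)
    (hC1 : ∀ r, 1 ≤ r → r < n → Cc r = c r)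
    (hCn : Cc n = c n * c' 0)
    (hC2 : ∀ r, 1 ≤ r → r ≤ m → Cc (n + r) = c' r) :
    (c 0 * (List.ofFn fun r : Fin n => a ((r : ℕ) + 1) * c ((r : ℕ) + 1)).prod) *
      (c' 0 * (List.ofFn fun r : Fin m => a' ((r : ℕ) + 1) * c' ((r : ℕ) + 1)).prod)
    = Cc 0 * (List.ofFn fun r : Fin (n + m) => A ((r : ℕ) + 1) * Cc ((r : ℕ) + 1)).prod := by
  obtain ⟨k, rfl⟩ : ∃ k, n = k + 1 := ⟨n - 1, by omega⟩
  have hsplit :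
      (List.ofFn fun r : Fin (k + 1 + m) => A ((r : ℕ) + 1) * Cc ((r : ℕ) + 1)).prod
      = (List.ofFn fun r : Fin (k + 1) => A ((r : ℕ) + 1) * Cc ((r : ℕ) + 1)).prod *
        (List.ofFn fun r : Fin m =>
          A ((k + 1) + ((r : ℕ) + 1)) * Cc ((k + 1) + ((r : ℕ) + 1))).prod := by
    rw [List.ofFn_add, List.prod_append]
    rfl
  rw [hsplit]
  have hsecond :
      (List.ofFn fun r : Fin m =>
        A ((k + 1) + ((r : ℕ) + 1)) * Cc ((k + 1) + ((r : ℕ) + 1))).prod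
      = (List.ofFn fun r : Fin m => a' ((r : ℕ) + 1) * c' ((r : ℕ) + 1)).prod := by
    have h : ∀ i : Fin m, A ((k + 1) + ((i : ℕ) + 1)) * Cc ((k + 1) + ((i : ℕ) + 1))
        = a' ((i : ℕ) + 1) * c' ((i : ℕ) + 1) := fun i => by
      rw [hA2 _ (by omega) (by omega), hC2 _ (by omega) (by omega)]
    simp only [h]
  rw [hsecond]
  have hfirst :
      (List.ofFn fun r : Fin (k + 1) => A ((r : ℕ) + 1) * Cc ((r : ℕ) + 1)).prod
      = (List.ofFn fun r : Fin (k + 1) => a ((r : ℕ) + 1) * c ((r : ℕ) + 1)).prod * c' 0 := by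
    rw [List.ofFn_succ', List.ofFn_succ', List.prod_concat, List.prod_concat]
    have hrest : (List.ofFn fun i : Fin k =>
          A (((Fin.castSucc i : Fin (k+1)) : ℕ) + 1) * Cc (((Fin.castSucc i : Fin (k+1)) : ℕ) + 1))
        = List.ofFn fun i : Fin k =>
          a (((Fin.castSucc i : Fin (k+1)) : ℕ) + 1) * c (((Fin.castSucc i : Fin (k+1)) : ℕ) + 1) := by
      have h : ∀ i : Fin k,
          A (((Fin.castSucc i : Fin (k + 1)) : ℕ) + 1) * Cc (((Fin.castSucc i : Fin (k + 1)) : ℕ) + 1)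
          = a (((Fin.castSucc i : Fin (k + 1)) : ℕ) + 1) * c (((Fin.castSucc i : Fin (k + 1)) : ℕ) + 1) := fun i => by
        have hik : ((Fin.castSucc i : Fin (k + 1)) : ℕ) = (i : ℕ) := rfl
        simp only [hik]
        rw [hA1 _ (by omega) (by omega), hC1 _ (by omega) (by omega)]
      simp only [h]
    rw [hrest]
    have hlastA : A (((Fin.last k : Fin (k+1)) : ℕ) + 1) = a (k + 1) := by
      simp only [Fin.val_last]; exact hA1 _ (by omega) (by omega)
    have hlastC : Cc (((Fin.last k : Fin (k+1)) : ℕ) + 1) = c (k + 1) * c' 0 := by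
      simp only [Fin.val_last]; exact hCn
    rw [hlastA, hlastC]
    simp [mul_assoc]
  rw [hfirst, hC0]
  simp [mul_assoc]

/-- The ideal `J` annihilates the cyclic monotone product: if `ω, τ` satisfy the cyclic
monotone factorization rule for alternating words with letters from a (possibly non-unital)
subalgebra `A` and a unital subalgebra `B`, and `x = c₀ a₁ c₁ ⋯ a_n c_n` with `n ≥ 2` and
`τ(c_r) = 0` for `r = 1,…,n−1`, then `ω(x) = 0`, and `ω(xy) = ω(yx) = 0` for every alternating
word `y = c′₀ a′₁ c′₁ ⋯ a′_m c′_m`. -/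
theorem ideal_annihilates_cyclic_monotone {C : Type*} [Ring C] [Algebra ℂ C]
    (Asub : NonUnitalSubalgebra ℂ C) (Bsub : Subalgebra ℂ C) (ω τ : C →ₗ[ℂ] ℂ)
    (hcyc : ∀ m : ℕ, 1 ≤ m → ∀ (a c : ℕ → C), (∀ r, a r ∈ Asub) → (∀ r, c r ∈ Bsub) →
      ω (c 0 * (List.ofFn fun r : Fin m => a ((r : ℕ) + 1) * c ((r : ℕ) + 1)).prod)
        = ω ((List.ofFn fun r : Fin m => a ((r : ℕ) + 1)).prod)
          * (∏ r ∈ Finset.Icc 1 (m - 1), τ (c r)) * τ (c m * c 0))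
    (n : ℕ) (hn : 2 ≤ n) (a c : ℕ → C)
    (ha : ∀ r, a r ∈ Asub) (hc : ∀ r, c r ∈ Bsub)
    (hτc : ∀ r, 1 ≤ r → r ≤ n - 1 → τ (c r) = 0) :
    ω (c 0 * (List.ofFn fun r : Fin n => a ((r : ℕ) + 1) * c ((r : ℕ) + 1)).prod) = 0 ∧
    ∀ m : ℕ, 1 ≤ m → ∀ (a' c' : ℕ → C), (∀ r, a' r ∈ Asub) → (∀ r, c' r ∈ Bsub) →
      ω ((c 0 * (List.ofFn fun r : Fin n => a ((r : ℕ) + 1) * c ((r : ℕ) + 1)).prod)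
          * (c' 0 * (List.ofFn fun r : Fin m => a' ((r : ℕ) + 1) * c' ((r : ℕ) + 1)).prod))
        = 0 ∧
      ω ((c' 0 * (List.ofFn fun r : Fin m => a' ((r : ℕ) + 1) * c' ((r : ℕ) + 1)).prod)
          * (c 0 * (List.ofFn fun r : Fin n => a ((r : ℕ) + 1) * c ((r : ℕ) + 1)).prod))
        = 0 := by
  constructor
  · rw [hcyc n (by omega) a c ha hc]
    have : (∏ r ∈ Finset.Icc 1 (n - 1), τ (c r)) = 0 :=
      Finset.prod_eq_zero (Finset.mem_Icc.mpr ⟨le_refl 1, by omega⟩) (hτc 1 le_rfl (by omega))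
    rw [this]; ring
  · intro m hm a' c' ha' hc'
    constructor
    · -- ω (x * y) = 0
      set A : ℕ → C := fun r => if r ≤ n then a r else a' (r - n) with hA
      set Cc : ℕ → C := fun r => if r < n then c r else if r = n then c n * c' 0 else c' (r - n)
        with hCc
      have hAmem : ∀ r, A r ∈ Asub := by
        intro r; simp only [hA]; split <;> [exact ha r; exact ha' _]
      have hCmem : ∀ r, Cc r ∈ Bsub := by
        intro r; simp only [hCc]
        split
        · exact hc r
        · split
          · exact mul_mem (hc n) (hc' 0)
          · exact hc' _
      have key := word_mul_concat (M := C) n m (by omega) a c a' c' A Cc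
        (fun r h1 h2 => by simp only [hA]; rw [if_pos h2])
        (fun r h1 h2 => by simp only [hA]; rw [if_neg (by omega)]; congr 1; omega)
        (by simp only [hCc]; rw [if_pos (by omega)])
        (fun r h1 h2 => by simp only [hCc]; rw [if_pos h2])
        (by simp only [hCc]; simp)
        (fun r h1 h2 => by
          simp only [hCc]; rw [if_neg (by omega), if_neg (by omega)]; congr 1; omega)
      rw [key, hcyc (n + m) (by omega) A Cc hAmem hCmem]
      have hz : (∏ r ∈ Finset.Icc 1 (n + m - 1), τ (Cc r)) = 0 := by
        apply Finset.prod_eq_zero (i := 1) (Finset.mem_Icc.mpr ⟨le_rfl, by omega⟩)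
        have : Cc 1 = c 1 := by simp only [hCc]; rw [if_pos (by omega)]
        rw [this]; exact hτc 1 le_rfl (by omega)
      rw [hz]; ring
    · -- ω (y * x) = 0
      set A : ℕ → C := fun r => if r ≤ m then a' r else a (r - m) with hA
      set Cc : ℕ → C := fun r => if r < m then c' r else if r = m then c' m * c 0 else c (r - m)
        with hCc
      have hAmem : ∀ r, A r ∈ Asub := by
        intro r; simp only [hA]; split <;> [exact ha' r; exact ha _]
      have hCmem : ∀ r, Cc r ∈ Bsub := by
        intro r; simp only [hCc]
        split
        · exact hc' r
        · split
          · exact mul_mem (hc' m) (hc 0)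
          · exact hc _
      have key := word_mul_concat (M := C) m n (by omega) a' c' a c A Cc
        (fun r h1 h2 => by simp only [hA]; rw [if_pos h2])
        (fun r h1 h2 => by simp only [hA]; rw [if_neg (by omega)]; congr 1; omega)
        (by simp only [hCc]; rw [if_pos (by omega)])
        (fun r h1 h2 => by simp only [hCc]; rw [if_pos h2])
        (by simp only [hCc]; simp)
        (fun r h1 h2 => by
          simp only [hCc]; rw [if_neg (by omega), if_neg (by omega)]; congr 1; omega)
      rw [key, hcyc (m + n) (by omega) A Cc hAmem hCmem]
      have hz : (∏ r ∈ Finset.Icc 1 (m + n - 1), τ (Cc r)) = 0 := by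
        apply Finset.prod_eq_zero (i := m + 1) (Finset.mem_Icc.mpr ⟨by omega, by omega⟩)
        have : Cc (m + 1) = c 1 := by
          simp only [hCc]; rw [if_neg (by omega), if_neg (by omega)]; congr 1; omega
        rw [this]; exact hτc 1 le_rfl (by omega)
      rw [hz]; ring
end

section
/- (Explicit moment formula in the cyclic monotone case.) Let C be a unital ℂ-algebra, B ⊆ C a unital subalgebra, ω, τ : C → ℂ linear, a₁,…,a_p ∈ C, and b₀ = 1, b₁,…,b_q ∈ B with τ(1) = 1, τ(b_i) = 0 (1 ≤ i ≤ q), τ(b_i b_j) = δ_{ij} (1 ≤ i,j ≤ q), satisfying the cyclic monotone factorization rule: for every m ≥ 1, j₁,…,j_m ∈ {1,…,p} and c₀,…,c_m ∈ B, ω(c₀ a_{j₁} c₁ ⋯ a_{j_m} c_m) = ω(a_{j₁} ⋯ a_{j_m}) τ(c₁) ⋯ τ(c_{m−1}) τ(c_m c₀). For coefficients λ_{i₁,i₂,j} ∈ ℂ set P = Σ_{i₁,i₂=0}^{q} Σ_{j=1}^{p} λ_{i₁,i₂,j} b_{i₁} a_j b_{i₂}. Then for every k ≥ 1, ω(P^k)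 = Σ_{i₁,i₃,…,i_{2k−1}=0}^{q} Σ_{j₁,…,j_k=1}^{p} (∏_{r=1}^{k} λ_{i_{2r−1}, i_{2r+1}, j_r}) ω(a_{j₁} ⋯ a_{j_k}), where the index i_{2k+1} is understood cyclically as i₁. -/
open BigOperators

lemma sum_fn_succ' {β M : Type*} [Fintype β] [AddCommMonoid M] (n : ℕ) (F : (Fin (n+1) → β) → M) :
    ∑ g : Fin (n+1) → β, F g = ∑ t : β, ∑ g : Fin n → β, F (Fin.cons t g) := by
  rw [← (Fin.consEquiv fun _ => β).sum_comp F, Fintype.sum_prod_type]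
  rfl

lemma aux_expand' {C : Type*} [Ring C] [Algebra ℂ C] {ι : Type*} [Fintype ι]
    (c : ι → ℂ) (x : ι → C) (k : ℕ) :
    (∑ t : ι, c t • x t) ^ k
      = ∑ g : Fin k → ι, (∏ r, c (g r)) • (List.ofFn fun r => x (g r)).prod := by
  induction k with
  | zero => simp
  | succ k ih =>
      rw [pow_succ', ih, Finset.mul_sum]
      rw [sum_fn_succ' (M := C) k
        (fun g => (∏ r, c (g r)) • (List.ofFn fun r => x (g r)).prod)]
      rw [Finset.sum_comm]
      refine Finset.sum_congr rfl fun t _ => ?_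
      rw [Finset.sum_mul]
      refine Finset.sum_congr rfl fun g _ => ?_
      simp only [Fin.prod_univ_succ, Fin.cons_zero, Fin.cons_succ,
        List.ofFn_succ, List.prod_cons]
      rw [smul_mul_assoc, mul_smul_comm, smul_smul]

lemma word_shift' {C : Type*} [Ring C] (u v w : ℕ → C) : ∀ n : ℕ,
    (List.ofFn fun r : Fin n => u (r : ℕ) * w (r : ℕ) * v (r : ℕ)).prod * u n
      = u 0 * (List.ofFn fun r : Fin n => w (r : ℕ) * (v (r : ℕ) * u ((r : ℕ) + 1))).prod := by
  intro n
  induction n with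
  | zero => simp
  | succ n ih =>
      rw [List.ofFn_succ' (fun r : Fin (n+1) => u (r : ℕ) * w (r : ℕ) * v (r : ℕ)),
        List.ofFn_succ' (fun r : Fin (n+1) => w (r : ℕ) * (v (r : ℕ) * u ((r : ℕ) + 1)))]
      simp only [List.concat_eq_append, List.prod_append, List.prod_cons, List.prod_nil,
        Fin.coe_castSucc, Fin.val_last, mul_one]
      calc (List.ofFn fun r : Fin n => u (r:ℕ) * w (r:ℕ) * v (r:ℕ)).prod *
            (u n * w n * v n) * u (n+1)
          = ((List.ofFn fun r : Fin n => u (r:ℕ) * w (r:ℕ) * v (r:ℕ)).prod * u n) *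
            (w n * (v n * u (n+1))) := by noncomm_ring
        _ = u 0 * (List.ofFn fun r : Fin n => w (r:ℕ) * (v (r:ℕ) * u ((r:ℕ)+1))).prod *
            (w n * (v n * u (n+1))) := by rw [ih]
        _ = _ := by rw [mul_assoc]

/-- Explicit moment formula in the cyclic monotone case: with
`P = Σ_{i₁,i₂=0}^{q} Σ_{j=1}^{p} λ_{i₁,i₂,j} b_{i₁} a_j b_{i₂}`, for every `k = e + 1 ≥ 1`,
`ω(P^k) = Σ_{i₁,i₃,…,i_{2k−1}} Σ_{j₁,…,j_k} (∏_{r=1}^{k} λ_{i_{2r−1},i_{2r+1},j_r})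
ω(a_{j₁} ⋯ a_{j_k})`, where `i_{2k+1}` is understood cyclically as `i₁` (the odd-position
indices are encoded as a function `ii : Fin k → Fin (q+1)` and the cyclic successor as
`ii (r + 1)` in `Fin k`). -/
theorem moment_formula_cyclic_monotone {C : Type*} [Ring C] [Algebra ℂ C]
    (Bsub : Subalgebra ℂ C) (ω τ : C →ₗ[ℂ] ℂ)
    (p q : ℕ) (a : Fin p → C) (b : Fin (q + 1) → C)
    (hb0 : b 0 = 1) (hbB : ∀ i, b i ∈ Bsub)
    (hτ1 : τ 1 = 1)
    (hτb : ∀ i : Fin (q + 1), i ≠ 0 → τ (b i) = 0)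
    (hτbb : ∀ i j : Fin (q + 1), i ≠ 0 → j ≠ 0 →
      τ (b i * b j) = if i = j then 1 else 0)
    (hcyc : ∀ m : ℕ, 1 ≤ m → ∀ (j : ℕ → Fin p) (c : ℕ → C), (∀ r, c r ∈ Bsub) →
      ω (c 0 * (List.ofFn fun r : Fin m => a (j ((r : ℕ) + 1)) * c ((r : ℕ) + 1)).prod)
        = ω ((List.ofFn fun r : Fin m => a (j ((r : ℕ) + 1))).prod)
          * (∏ r ∈ Finset.Icc 1 (m - 1), τ (c r)) * τ (c m * c 0))
    (lam : Fin (q + 1) → Fin (q + 1) → Fin p → ℂ)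
    (e : ℕ) :
    ω ((∑ i₁ : Fin (q + 1), ∑ i₂ : Fin (q + 1), ∑ j : Fin p,
          lam i₁ i₂ j • (b i₁ * a j * b i₂)) ^ (e + 1))
      = ∑ ii : Fin (e + 1) → Fin (q + 1), ∑ jj : Fin (e + 1) → Fin p,
          (∏ r : Fin (e + 1), lam (ii r) (ii (r + 1)) (jj r))
            * ω ((List.ofFn fun r : Fin (e + 1) => a (jj r)).prod) := by
  classical
  -- general delta rule for τ (b i * b j)
  have hτbb' : ∀ i j : Fin (q + 1), τ (b i * b j) = if i = j then 1 else 0 := by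
    intro i j
    by_cases hi : i = 0 <;> by_cases hj : j = 0
    · subst hi; subst hj; simp [hb0, hτ1]
    · subst hi; rw [hb0, one_mul, hτb j hj, if_neg (fun h => hj h.symm)]
    · subst hj; rw [hb0, mul_one, hτb i hi, if_neg hi]
    · exact hτbb i j hi hj
  -- rewrite the triple sum as a single sum over a product type
  have hP : (∑ i₁ : Fin (q + 1), ∑ i₂ : Fin (q + 1), ∑ j : Fin p,
        lam i₁ i₂ j • (b i₁ * a j * b i₂))
      = ∑ t : Fin (q + 1) × Fin (q + 1) × Fin p,
          lam t.1 t.2.1 t.2.2 • (b t.1 * a t.2.2 * b t.2.1) := by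
    simp only [Fintype.sum_prod_type]
  rw [hP, aux_expand', map_sum]
  simp only [map_smul, smul_eq_mul]
  -- compute ω of each word
  have hword : ∀ g : Fin (e + 1) → Fin (q + 1) × Fin (q + 1) × Fin p,
      ω ((List.ofFn fun r : Fin (e + 1) => b (g r).1 * a (g r).2.2 * b (g r).2.1).prod)
        = ω ((List.ofFn fun r : Fin (e + 1) => a ((g r).2.2)).prod)
          * ∏ s : Fin (e + 1), (if (g s).2.1 = (g (s + 1)).1 then (1 : ℂ) else 0) := by
    intro g
    set f : ℕ → Fin (e + 1) := fun s => ⟨s % (e + 1), Nat.mod_lt _ (Nat.succ_pos e)⟩ with hf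
    set u : ℕ → C := fun s => if s ≤ e then b ((g (f s)).1) else 1 with hu
    set v : ℕ → C := fun s => b ((g (f s)).2.1) with hv
    set w : ℕ → C := fun s => a ((g (f s)).2.2) with hwdef
    set c : ℕ → C := fun s => if s = 0 then u 0 else v (s - 1) * u s with hcdef
    set j : ℕ → Fin p := fun s => (g (f (s - 1))).2.2 with hjdef
    have hfr : ∀ r : Fin (e + 1), f (r : ℕ) = r :=
      fun r => Fin.ext (Nat.mod_eq_of_lt r.isLt)
    have huB : ∀ s, u s ∈ Bsub := by
      intro s; rw [hu]; dsimp only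
      split_ifs
      · exact hbB _
      · exact Subalgebra.one_mem _
    have hcB : ∀ r, c r ∈ Bsub := by
      intro r; rw [hcdef]; dsimp only
      split_ifs
      · exact huB 0
      · exact Subalgebra.mul_mem _ (hbB _) (huB r)
    have key := hcyc (e + 1) (by omega) j c hcB
    have hf0 : f 0 = 0 := by apply Fin.ext; simp [hf]
    have hfe : f e = Fin.last e := by
      apply Fin.ext
      simp [hf, Fin.val_last, Nat.mod_eq_of_lt (Nat.lt_succ_self e)]
    have hlast1 : Fin.last e + 1 = (0 : Fin (e + 1)) := by
      apply Fin.ext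
      rw [Fin.val_add, Fin.val_last, Fin.val_one']
      cases e with
      | zero => rfl
      | succ e' =>
          rw [Nat.mod_eq_of_lt (by omega : 1 < e' + 1 + 1)]
          simp [Nat.mod_self]
    have hlist : (fun r : Fin (e + 1) => a (j ((r : ℕ) + 1)) * c ((r : ℕ) + 1))
        = fun r : Fin (e + 1) => w (r : ℕ) * (v (r : ℕ) * u ((r : ℕ) + 1)) := by
      funext r
      rw [hjdef, hcdef]; dsimp only
      rw [if_neg (Nat.succ_ne_zero _)]
      simp only [Nat.add_sub_cancel]
      rfl
    have hue : u (e + 1) = 1 := by rw [hu]; exact if_neg (by omega)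
    have hc0 : c 0 = u 0 := by rw [hcdef]; dsimp only; rw [if_pos rfl]
    have hws := word_shift' u v w (e + 1)
    have hword' : (List.ofFn fun r : Fin (e + 1) =>
          b (g r).1 * a ((g r).2.2) * b (g r).2.1).prod
        = c 0 * (List.ofFn fun r : Fin (e + 1) => a (j ((r : ℕ) + 1)) * c ((r : ℕ) + 1)).prod := by
      have hfun : (fun r : Fin (e + 1) => b (g r).1 * a ((g r).2.2) * b (g r).2.1)
          = fun r : Fin (e + 1) => u (r : ℕ) * w (r : ℕ) * v (r : ℕ) := by
        funext r
        rw [hu, hv, hwdef]; dsimp only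
        rw [hfr r, if_pos (by omega : (r : ℕ) ≤ e)]
      rw [hlist, hc0, ← hws, hue, mul_one, hfun]
    rw [hword', key]
    -- the a-word
    have halist : (fun r : Fin (e + 1) => a (j ((r : ℕ) + 1)))
        = fun r : Fin (e + 1) => a ((g r).2.2) := by
      funext r
      rw [hjdef]; dsimp only
      rw [Nat.add_sub_cancel, hfr r]
    -- the closing delta
    have hclose : τ (c (e + 1) * c 0)
        = if (g (Fin.last e)).2.1 = (g 0).1 then (1 : ℂ) else 0 := by
      have h1 : c (e + 1) = v e * u (e + 1) := by
        rw [hcdef]; dsimp only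
        rw [if_neg (Nat.succ_ne_zero _)]
        simp only [Nat.add_sub_cancel]
      have h2 : u 0 = b ((g 0).1) := by
        rw [hu]; dsimp only
        rw [if_pos (Nat.zero_le e), hf0]
      have h3 : v e = b ((g (Fin.last e)).2.1) := by
        rw [hv]; dsimp only; rw [hfe]
      rw [h1, hue, mul_one, hc0, h2, h3, hτbb']
    -- the middle deltas
    have hmid : (∏ r ∈ Finset.Icc 1 (e + 1 - 1), τ (c r))
        = ∏ s : Fin e, (if (g (Fin.castSucc s)).2.1
            = (g (Fin.castSucc s + 1)).1 then (1 : ℂ) else 0) := by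
      rw [(by omega : e + 1 - 1 = e), ← Finset.Ico_add_one_right_eq_Icc, Finset.prod_Ico_eq_prod_range]
      rw [(by omega : e + 1 - 1 = e)]
      rw [Finset.prod_range fun i => τ (c (1 + i))]
      refine Finset.prod_congr rfl fun s _ => ?_
      have hs := s.isLt
      have hfs : f (s : ℕ) = Fin.castSucc s := by
        apply Fin.ext
        simp [hf, Fin.coe_castSucc, Nat.mod_eq_of_lt (by omega : (s : ℕ) < e + 1)]
      have hfs1 : f ((s : ℕ) + 1) = Fin.castSucc s + 1 := by
        apply Fin.ext
        rw [Fin.val_add, Fin.coe_castSucc, Fin.val_one']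
        simp only [hf]
        rw [Nat.mod_eq_of_lt (by omega : 1 < e + 1),
          Nat.mod_eq_of_lt (by omega : (s : ℕ) + 1 < e + 1)]
      have hcs : c (1 + (s : ℕ)) = v (s : ℕ) * u ((s : ℕ) + 1) := by
        rw [hcdef]; dsimp only
        rw [if_neg (by omega)]
        rw [(by omega : 1 + (s : ℕ) - 1 = (s : ℕ)), (by omega : 1 + (s : ℕ) = (s : ℕ) + 1)]
      have hv' : v (s : ℕ) = b ((g (Fin.castSucc s)).2.1) := by
        rw [hv]; dsimp only; rw [hfs]
      have hu' : u ((s : ℕ) + 1) = b ((g (Fin.castSucc s + 1)).1) := by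
        rw [hu]; dsimp only
        rw [if_pos (by omega : (s : ℕ) + 1 ≤ e), hfs1]
      rw [hcs, hv', hu', hτbb']
    rw [halist, hclose, hmid, Fin.prod_univ_castSucc, hlast1]
    ring
  -- use hword termwise
  have hstep : (∑ g : Fin (e + 1) → Fin (q + 1) × Fin (q + 1) × Fin p,
        (∏ r, lam (g r).1 (g r).2.1 (g r).2.2) *
          ω ((List.ofFn fun r => b (g r).1 * a (g r).2.2 * b (g r).2.1).prod))
      = ∑ g : Fin (e + 1) → Fin (q + 1) × Fin (q + 1) × Fin p,
          (∏ r, lam (g r).1 (g r).2.1 (g r).2.2) *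
            (ω ((List.ofFn fun r : Fin (e + 1) => a ((g r).2.2)).prod)
              * ∏ s : Fin (e + 1), (if (g s).2.1 = (g (s + 1)).1 then (1 : ℂ) else 0)) :=
    Finset.sum_congr rfl fun g _ => by rw [hword g]
  rw [hstep]
  -- reindex over triples of functions
  let E : ((Fin (e + 1) → Fin (q + 1)) × (Fin (e + 1) → Fin (q + 1)) × (Fin (e + 1) → Fin p))
      ≃ (Fin (e + 1) → Fin (q + 1) × Fin (q + 1) × Fin p) :=
    { toFun := fun x r => (x.1 r, x.2.1 r, x.2.2 r)
      invFun := fun g => (fun r => (g r).1, fun r => (g r).2.1, fun r => (g r).2.2)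
      left_inv := fun x => rfl
      right_inv := fun g => rfl }
  rw [← E.sum_comp (fun g => (∏ r, lam (g r).1 (g r).2.1 (g r).2.2) *
      (ω ((List.ofFn fun r : Fin (e + 1) => a ((g r).2.2)).prod)
        * ∏ s : Fin (e + 1), (if (g s).2.1 = (g (s + 1)).1 then (1 : ℂ) else 0)))]
  simp only [Fintype.sum_prod_type]
  refine Finset.sum_congr rfl fun ii _ => ?_
  rw [Finset.sum_comm]
  refine Finset.sum_congr rfl fun jj _ => ?_
  have hboole : ∀ y : Fin (e + 1) → Fin (q + 1),
      (∏ s : Fin (e + 1), (if y s = ii (s + 1) then (1 : ℂ) else 0))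
        = if y = (fun s => ii (s + 1)) then 1 else 0 := by
    intro y
    rw [Fintype.prod_boole]
    by_cases h : ∀ s : Fin (e + 1), y s = ii (s + 1)
    · rw [if_pos h, if_pos (funext h)]
    · rw [if_neg h, if_neg (fun hy => h fun s => congrFun hy s)]
  have : ∀ y : Fin (e + 1) → Fin (q + 1),
      (∏ r, lam (ii r) (y r) (jj r)) *
        (ω ((List.ofFn fun r : Fin (e + 1) => a (jj r)).prod) *
          ∏ s : Fin (e + 1), (if y s = ii (s + 1) then (1 : ℂ) else 0))
      = if y = (fun s => ii (s + 1)) then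
          (∏ r, lam (ii r) (y r) (jj r)) *
            ω ((List.ofFn fun r : Fin (e + 1) => a (jj r)).prod) else 0 := by
    intro y
    rw [hboole y, mul_ite, mul_ite, mul_one, mul_zero, mul_zero]
  simp only [E, Equiv.coe_fn_mk]
  rw [Finset.sum_congr rfl (fun y _ => this y), Finset.sum_ite_eq' Finset.univ]
  simp only [Finset.mem_univ, if_true]
end
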